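/- arXiv:2408.15990 — 2 statements merged into one kernel-verified Lean document; each statement's English description precedes it below -/
import Mathlib

section
/- Consider the closed-loop system: dλ₁/dt = max{-ζ(t), -λ₁(t)/ε}, dπ/dt = K₁λ₁(t) - K₂ζ(t) with K₁, K₂ > 0, where ζ(t) = C₁ - q₁ - q₂/(1 + exp(α*(u(t) - π* w(t)))) and u(t) = π(t)w(t) + ln((q₁ + q₂ - C₁)/(C₁ - q₁))/α*. At any equilibrium state (defined by dλ₁/dt = 0 and dπ/dt = 0), one has λ₁ = 0, ζ = 0, and π = π* provided w(t) ≠ 0. -/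
/-- Equilibrium of the closed-loop system: with `dλ₁/dt = max(-ζ, -λ₁/ε)`,
`dπ/dt = K₁λ₁ - K₂ζ`, logit residual capacity and controller price, at any
equilibrium (both derivatives zero) one has `λ₁ = 0`, `ζ = 0`, and, provided
`w ≠ 0`, `π = π*`. -/
theorem stmt_3 (C₁ C₂ q₁ q₂ πs αs K₁ K₂ ε : ℝ)
    (hq₁ : 0 < q₁) (hq₁C : q₁ < C₁) (hdem : q₁ + q₂ > C₁ + C₂) (hC₂ : 0 < C₂)
    (hπ : 0 < πs) (hα : 0 < αs) (hK₁ : 0 < K₁) (hK₂ : 0 < K₂) (hε : 0 < ε)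
    (lam₁ ζ w π u : ℝ) (hlam₁ : 0 ≤ lam₁)
    (hu : u = π * w + Real.log ((q₁ + q₂ - C₁) / (C₁ - q₁)) / αs)
    (hζ : ζ = C₁ - q₁ - q₂ / (1 + Real.exp (αs * (u - πs * w))))
    (heq₁ : max (-ζ) (-(lam₁ / ε)) = 0)
    (heq₂ : K₁ * lam₁ - K₂ * ζ = 0) :
    lam₁ = 0 ∧ ζ = 0 ∧ (w ≠ 0 → π = πs) := by
  have hζ0 : ζ = 0 := by
    have h1 : -ζ ≤ 0 := heq₁ ▸ le_max_left _ _
    rcases max_cases (-ζ) (-(lam₁ / ε)) with ⟨h, _⟩ | ⟨h, _⟩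
    · linarith [heq₁ ▸ h]
    · -- -(lam₁/ε) = 0, so lam₁ = 0, then K₂ ζ = 0
      have hl : lam₁ = 0 := by
        have := heq₁ ▸ h
        have : lam₁ / ε = 0 := by linarith
        field_simp at this; linarith
      have : K₂ * ζ = 0 := by rw [hl] at heq₂; linarith
      rcases mul_eq_zero.mp this with h' | h'
      · linarith
      · exact h'
  have hl0 : lam₁ = 0 := by
    rw [hζ0] at heq₂
    have : K₁ * lam₁ = 0 := by linarith
    rcases mul_eq_zero.mp this with h' | h'
    · linarith
    · exact h'
  refine ⟨hl0, hζ0, fun hw => ?_⟩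
  set E := Real.exp (αs * (u - πs * w)) with hE
  have hEpos : 0 < E := Real.exp_pos _
  have h1E : (0:ℝ) < 1 + E := by linarith
  have hC₁q : 0 < C₁ - q₁ := by linarith
  have hnum : 0 < q₁ + q₂ - C₁ := by linarith
  -- from ζ = 0 : q₂ / (1+E) = C₁ - q₁
  have key : E = (q₁ + q₂ - C₁) / (C₁ - q₁) := by
    rw [hζ0] at hζ
    have : q₂ = (C₁ - q₁) * (1 + E) := by
      field_simp at hζ; linarith
    field_simp
    linarith [this]
  have hlogE : αs * (u - πs * w) = Real.log ((q₁ + q₂ - C₁) / (C₁ - q₁)) := by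
    have := congrArg Real.log key
    rwa [hE, Real.log_exp] at this
  rw [hu] at hlogE
  have hαw : αs * ((π - πs) * w) = 0 := by
    field_simp at hlogE
    ring_nf at hlogE ⊢
    linarith
  rcases mul_eq_zero.mp hαw with h | h
  · linarith
  · rcases mul_eq_zero.mp h with h' | h'
    · linarith [h']
    · exact absurd h' hw
end

section
/- With the single integral pricing controller u(t+Δt) = u(t) + K_I(q_{HOT}(t) - q*_{HOT}) with K_I > 0 and constant demands: if the system is at the desired state q_{HOT}(t) = q*_{HOT} at some time with u held constant, but the queuing-time difference w(t) strictly increases with t, then the logit demand q_{HOT}(t+Δt) = q₁ + q₂/(1 + exp(α*(u - π* w(t+Δt)))) strictly exceeds q*_{HOT}; i.e., the desired state is not invariant under the feedback law. -/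
/-- The single integral pricing controller cannot keep the desired state:
if at time `t` the HOT demand equals the desired value `q*` under price `u`
held constant, but the queuing-time difference strictly increases, then the
logit HOT demand at `t + Δt` strictly exceeds `q*`. -/
theorem stmt_11 (q₁ q₂ αs πs qstar u Δt t : ℝ)
    (hq₂ : 0 < q₂) (hα : 0 < αs) (hπ : 0 < πs) (hΔt : 0 < Δt)
    (w : ℝ → ℝ) (hw : StrictMono w)
    (hdes : q₁ + q₂ / (1 + Real.exp (αs * (u - πs * w t))) = qstar) :
    q₁ + q₂ / (1 + Real.exp (αs * (u - πs * w (t + Δt)))) > qstar := by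
  subst hdes
  have hwlt : w t < w (t + Δt) := hw (by linarith)
  have hexp : Real.exp (αs * (u - πs * w (t + Δt))) <
      Real.exp (αs * (u - πs * w t)) := by
    apply Real.exp_lt_exp.2
    nlinarith [mul_pos hα (mul_pos hπ (sub_pos.2 hwlt))]
  have h1 : (0:ℝ) < 1 + Real.exp (αs * (u - πs * w (t + Δt))) := by
    positivity
  have h2 : (0:ℝ) < 1 + Real.exp (αs * (u - πs * w t)) := by positivity
  have := div_lt_div_of_pos_left hq₂ h1 (show 1 + Real.exp (αs * (u - πs * w (t + Δt))) < 1 + Real.exp (αs * (u - πs * w t)) by linarith)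
  linarith
end
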